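/- Let ℝⁿ = ℝ^{n₁}×ℝ^{n₂}, let 𝒮_x, 𝒮_y be bases of shapes in ℝ^{n₁}, ℝ^{n₂} respectively, and let 𝒮 have the strong decomposition property with respect to {𝒮_x, 𝒮_y}. If f ∈ BMO_{𝒮_x}(ℝⁿ), then f ∈ BMO_{rec,𝒮}(ℝ^{n₁}×ℝ^{n₂}) with ‖f‖_{BMO_{rec,𝒮}} ≤ 2‖f‖_{BMO_{𝒮_x}(ℝⁿ)}; similarly, if f ∈ BMO_{𝒮_y}(ℝⁿ), then ‖f‖_{BMO_{rec,𝒮}} ≤ 2‖f‖_{BMO_{𝒮_y}(ℝⁿ)}. Hence if f ∈ BMO_{𝒮_x}(ℝⁿ) ∪ BMO_{𝒮_y}(ℝⁿ), then ‖f‖_{BMO_{rec,𝒮}} ≤ 2 min(‖f‖_{BMO_{𝒮_x}(ℝⁿ)}, ‖f‖_{BMO_{𝒮_y}(ℝⁿ)}). -/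

import Mathlib

open MeasureTheory Set ENNReal

noncomputable section

/-- A shape: an open set of finite positive Lebesgue measure. -/
def IsShape {α : Type*} [TopologicalSpace α] [MeasureSpace α] (S : Set α) : Prop :=
  IsOpen S ∧ 0 < volume S ∧ volume S < ⊤

/-- A basis of shapes: a collection of shapes covering the space. -/
def IsShapeBasis {α : Type*} [TopologicalSpace α] [MeasureSpace α] (𝒮 : Set (Set α)) : Prop :=
  (∀ S ∈ 𝒮, IsShape S) ∧ ⋃₀ 𝒮 = Set.univ

/-- `𝒮` has the strong decomposition property with respect to `{𝒮x, 𝒮y}`. -/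
def StrongDecomposition2 {A B : Type*} (𝒮 : Set (Set (A × B)))
    (𝒮x : Set (Set A)) (𝒮y : Set (Set B)) : Prop :=
  (∀ S ∈ 𝒮, ∃ S₁ ∈ 𝒮x, ∃ S₂ ∈ 𝒮y, S = S₁ ×ˢ S₂) ∧
  (∀ S₁ ∈ 𝒮x, ∀ S₂ ∈ 𝒮y, S₁ ×ˢ S₂ ∈ 𝒮)

/-- The rectangular BMO norm of `f` with respect to the bases `𝒮x, 𝒮y`:
`sup_{S₁ ∈ 𝒮x, S₂ ∈ 𝒮y} ⨍_{S₁} ⨍_{S₂} |f(x,y) − (f_x)_{S₂} − (f_y)_{S₁} + f_{S₁×S₂}|`. -/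
def recBmoNorm {A B : Type*} [MeasureSpace A] [MeasureSpace B]
    [SigmaFinite (volume : Measure A)] [SigmaFinite (volume : Measure B)]
    (𝒮x : Set (Set A)) (𝒮y : Set (Set B)) (f : A × B → ℝ) : ℝ≥0∞ :=
  ⨆ S₁ ∈ 𝒮x, ⨆ S₂ ∈ 𝒮y, ENNReal.ofReal
    (⨍ x in S₁, ⨍ y in S₂,
      |f (x, y) - (⨍ y' in S₂, f (x, y')) - (⨍ x' in S₁, f (x', y)) + ⨍ z in S₁ ×ˢ S₂, f z|)

/-- The uniform lower-dimensional `BMO_{𝒮x}(ℝⁿ)` norm: `sup_y sup_{S₁ ∈ 𝒮x} ⨍_{S₁} |f_y − (f_y)_{S₁}|`. -/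
def bmoXNorm {A B : Type*} [MeasureSpace A]
    (𝒮x : Set (Set A)) (f : A × B → ℝ) : ℝ≥0∞ :=
  ⨆ y : B, ⨆ S₁ ∈ 𝒮x, ENNReal.ofReal (⨍ x in S₁, |f (x, y) - ⨍ x' in S₁, f (x', y)|)

/-- The uniform lower-dimensional `BMO_{𝒮y}(ℝⁿ)` norm: `sup_x sup_{S₂ ∈ 𝒮y} ⨍_{S₂} |f_x − (f_x)_{S₂}|`. -/
def bmoYNorm {A B : Type*} [MeasureSpace B]
    (𝒮y : Set (Set B)) (f : A × B → ℝ) : ℝ≥0∞ :=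
  ⨆ x : A, ⨆ S₂ ∈ 𝒮y, ENNReal.ofReal (⨍ y in S₂, |f (x, y) - ⨍ y' in S₂, f (x, y')|)

namespace BmoAux

variable {A B : Type*} [MeasurableSpace A] [MeasurableSpace B]

lemma smul_prod_smul (μ : Measure A) (ν : Measure B) [IsFiniteMeasure μ] [IsFiniteMeasure ν]
    (c d : ℝ≥0∞) (hc : c ≠ ⊤) (hd : d ≠ ⊤) :
    (c • μ).prod (d • ν) = (c * d) • (μ.prod ν) := by
  haveI : IsFiniteMeasure (c • μ) :=
    ⟨by simp only [Measure.smul_apply, smul_eq_mul]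
        exact ENNReal.mul_lt_top hc.lt_top (measure_lt_top μ _)⟩
  haveI : IsFiniteMeasure (d • ν) :=
    ⟨by simp only [Measure.smul_apply, smul_eq_mul]
        exact ENNReal.mul_lt_top hd.lt_top (measure_lt_top ν _)⟩
  refine Measure.prod_eq fun s t hs ht => ?_
  simp only [Measure.smul_apply, smul_eq_mul, Measure.prod_prod]
  ring

lemma key_prob_x (μ : Measure A) (ν : Measure B)
    [IsProbabilityMeasure μ] [IsProbabilityMeasure ν]
    (f : A × B → ℝ) (hfm : Measurable f)
    (hf : Integrable f (μ.prod ν))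
    (hfx : ∀ x, Integrable (fun y => f (x, y)) ν)
    (m : ℝ)
    (hbd : ∀ y, ∫ x, |f (x, y) - ∫ x', f (x', y) ∂μ| ∂μ ≤ m) :
    ∫ x, ∫ y, |f (x, y) - (∫ y', f (x, y') ∂ν) - (∫ x', f (x', y) ∂μ) +
      ∫ z, f z ∂(μ.prod ν)| ∂ν ∂μ ≤ 2 * m := by
  set b : B → ℝ := fun y => ∫ x, f (x, y) ∂μ with hb_def
  have hbm : StronglyMeasurable b := hfm.stronglyMeasurable.integral_prod_left'
  have hb_int : Integrable b ν := hf.integral_prod_right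
  have hb_int' : Integrable (fun p : A × B => b p.2) (μ.prod ν) := by
    have h2 : Integrable b (Measure.map Prod.snd (μ.prod ν)) := by
      rw [Measure.map_snd_prod, measure_univ, one_smul]; exact hb_int
    exact (integrable_map_measure hbm.aestronglyMeasurable
      measurable_snd.aemeasurable).1 h2
  set g : A × B → ℝ := fun p => f p - b p.2 with hg_def
  have hg : Integrable g (μ.prod ν) := hf.sub hb_int'
  have hgx : ∀ x, Integrable (fun y => g (x, y)) ν := fun x => (hfx x).sub hb_int
  have hc : (∫ z, f z ∂(μ.prod ν)) = ∫ y, b y ∂ν := integral_prod_symm f hf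
  have hEeq : ∀ x y, f (x, y) - (∫ y', f (x, y') ∂ν) - (∫ x', f (x', y) ∂μ) +
      (∫ z, f z ∂(μ.prod ν)) = g (x, y) - ∫ y', g (x, y') ∂ν := by
    intro x y
    have h3 : (∫ y', g (x, y') ∂ν) = (∫ y', f (x, y') ∂ν) - ∫ y', b y' ∂ν :=
      integral_sub (hfx x) hb_int
    rw [h3, hc]
    simp only [hg_def]
    ring
  have stepD : ∀ x, (∫ y, |f (x, y) - (∫ y', f (x, y') ∂ν) - (∫ x', f (x', y) ∂μ) +
      ∫ z, f z ∂(μ.prod ν)| ∂ν) ≤ 2 * ∫ y, |g (x, y)| ∂ν := by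
    intro x
    have h1 : (∫ y, |f (x, y) - (∫ y', f (x, y') ∂ν) - (∫ x', f (x', y) ∂μ) +
        ∫ z, f z ∂(μ.prod ν)| ∂ν) ≤ ∫ y, (|g (x, y)| + ∫ y', |g (x, y')| ∂ν) ∂ν := by
      refine integral_mono_of_nonneg (Filter.Eventually.of_forall fun y => abs_nonneg _)
        ((hgx x).abs.add (integrable_const _)) (Filter.Eventually.of_forall fun y => ?_)
      simp only []; rw [hEeq x y]
      refine (abs_sub _ _).trans (add_le_add le_rfl ?_)
      have habs := norm_integral_le_integral_norm (μ := ν) (fun y' => g (x, y'))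
      simpa [Real.norm_eq_abs] using habs
    have h2 : (∫ y, (|g (x, y)| + ∫ y', |g (x, y')| ∂ν) ∂ν)
        = (∫ y, |g (x, y)| ∂ν) + ∫ y', |g (x, y')| ∂ν := by
      rw [integral_add (hgx x).abs (integrable_const _), integral_const]
      simp
    rw [h2] at h1
    linarith
  have hgnorm : Integrable (fun x => ∫ y, |g (x, y)| ∂ν) μ := by
    have h4 := hg.norm.integral_prod_left
    simpa [Real.norm_eq_abs] using h4
  have stepE : ∫ x, ∫ y, |f (x, y) - (∫ y', f (x, y') ∂ν) - (∫ x', f (x', y) ∂μ) +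
      ∫ z, f z ∂(μ.prod ν)| ∂ν ∂μ ≤ 2 * ∫ x, ∫ y, |g (x, y)| ∂ν ∂μ := by
    rw [← integral_const_mul]
    refine integral_mono_of_nonneg
      (Filter.Eventually.of_forall fun x => integral_nonneg fun y => abs_nonneg _)
      (hgnorm.const_mul 2) (Filter.Eventually.of_forall fun x => stepD x)
  have hswap : (∫ x, ∫ y, |g (x, y)| ∂ν ∂μ) = ∫ y, ∫ x, |g (x, y)| ∂μ ∂ν := by
    apply integral_integral_swap
    have h5 := hg.norm
    simpa [Function.uncurry_def, Real.norm_eq_abs] using h5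
  have hfin : (∫ y, ∫ x, |g (x, y)| ∂μ ∂ν) ≤ m := by
    calc (∫ y, ∫ x, |g (x, y)| ∂μ ∂ν) ≤ ∫ _, m ∂ν := by
          refine integral_mono_of_nonneg
            (Filter.Eventually.of_forall fun y => integral_nonneg fun x => abs_nonneg _)
            (integrable_const m) (Filter.Eventually.of_forall fun y => hbd y)
      _ = m := by simp
  rw [hswap] at stepE
  linarith

lemma key_prob_y (μ : Measure A) (ν : Measure B)
    [IsProbabilityMeasure μ] [IsProbabilityMeasure ν]
    (f : A × B → ℝ) (hfm : Measurable f)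
    (hf : Integrable f (μ.prod ν))
    (hfx : ∀ x, Integrable (fun y => f (x, y)) ν)
    (hfy : ∀ y, Integrable (fun x => f (x, y)) μ)
    (m : ℝ)
    (hbd : ∀ x, ∫ y, |f (x, y) - ∫ y', f (x, y') ∂ν| ∂ν ≤ m) :
    ∫ x, ∫ y, |f (x, y) - (∫ y', f (x, y') ∂ν) - (∫ x', f (x', y) ∂μ) +
      ∫ z, f z ∂(μ.prod ν)| ∂ν ∂μ ≤ 2 * m := by
  set a : A → ℝ := fun x => ∫ y, f (x, y) ∂ν with ha_def
  have ham : StronglyMeasurable a := hfm.stronglyMeasurable.integral_prod_right'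
  have ha_int : Integrable a μ := hf.integral_prod_left
  have ha_int' : Integrable (fun p : A × B => a p.1) (μ.prod ν) := by
    have h2 : Integrable a (Measure.map Prod.fst (μ.prod ν)) := by
      rw [Measure.map_fst_prod, measure_univ, one_smul]; exact ha_int
    exact (integrable_map_measure ham.aestronglyMeasurable
      measurable_fst.aemeasurable).1 h2
  set g : A × B → ℝ := fun p => f p - a p.1 with hg_def
  have hg : Integrable g (μ.prod ν) := hf.sub ha_int'
  have hgx : ∀ x, Integrable (fun y => g (x, y)) ν :=
    fun x => (hfx x).sub (integrable_const (a x))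
  have hc : (∫ z, f z ∂(μ.prod ν)) = ∫ x, a x ∂μ := integral_prod f hf
  have hEeq : ∀ x y, f (x, y) - (∫ y', f (x, y') ∂ν) - (∫ x', f (x', y) ∂μ) +
      (∫ z, f z ∂(μ.prod ν)) = g (x, y) - ∫ x', g (x', y) ∂μ := by
    intro x y
    have h3 : (∫ x', g (x', y) ∂μ) = (∫ x', f (x', y) ∂μ) - ∫ x', a x' ∂μ :=
      integral_sub (hfy y) ha_int
    rw [h3, hc]
    simp only [hg_def]
    ring
  have hk_int : Integrable (fun y => ∫ x', |g (x', y)| ∂μ) ν := by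
    have h4 := hg.norm.integral_prod_right
    simpa [Real.norm_eq_abs] using h4
  have hbd' : ∀ x, (∫ y, |g (x, y)| ∂ν) ≤ m := hbd
  have stepD : ∀ x, (∫ y, |f (x, y) - (∫ y', f (x, y') ∂ν) - (∫ x', f (x', y) ∂μ) +
      ∫ z, f z ∂(μ.prod ν)| ∂ν) ≤
      (∫ y, |g (x, y)| ∂ν) + ∫ y, ∫ x', |g (x', y)| ∂μ ∂ν := by
    intro x
    have h1 : (∫ y, |f (x, y) - (∫ y', f (x, y') ∂ν) - (∫ x', f (x', y) ∂μ) +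
        ∫ z, f z ∂(μ.prod ν)| ∂ν) ≤ ∫ y, (|g (x, y)| + ∫ x', |g (x', y)| ∂μ) ∂ν := by
      refine integral_mono_of_nonneg (Filter.Eventually.of_forall fun y => abs_nonneg _)
        ((hgx x).abs.add hk_int) (Filter.Eventually.of_forall fun y => ?_)
      simp only []; rw [hEeq x y]
      refine (abs_sub _ _).trans (add_le_add le_rfl ?_)
      have habs := norm_integral_le_integral_norm (μ := μ) (fun x' => g (x', y))
      simpa [Real.norm_eq_abs] using habs
    rw [integral_add (hgx x).abs hk_int] at h1
    exact h1
  have hgnorm : Integrable (fun x => ∫ y, |g (x, y)| ∂ν) μ := by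
    have h4 := hg.norm.integral_prod_left
    simpa [Real.norm_eq_abs] using h4
  have stepE : ∫ x, ∫ y, |f (x, y) - (∫ y', f (x, y') ∂ν) - (∫ x', f (x', y) ∂μ) +
      ∫ z, f z ∂(μ.prod ν)| ∂ν ∂μ ≤
      (∫ x, ∫ y, |g (x, y)| ∂ν ∂μ) + ∫ y, ∫ x', |g (x', y)| ∂μ ∂ν := by
    have h6 : ∫ x, ((∫ y, |g (x, y)| ∂ν) + ∫ y, ∫ x', |g (x', y)| ∂μ ∂ν) ∂μ
        = (∫ x, ∫ y, |g (x, y)| ∂ν ∂μ) + ∫ y, ∫ x', |g (x', y)| ∂μ ∂ν := by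
      rw [integral_add hgnorm (integrable_const _), integral_const]
      simp
    rw [← h6]
    refine integral_mono_of_nonneg
      (Filter.Eventually.of_forall fun x => integral_nonneg fun y => abs_nonneg _)
      (hgnorm.add (integrable_const _)) (Filter.Eventually.of_forall fun x => stepD x)
  have hswap : (∫ y, ∫ x, |g (x, y)| ∂μ ∂ν) = ∫ x, ∫ y, |g (x, y)| ∂ν ∂μ := by
    symm
    apply integral_integral_swap
    have h5 := hg.norm
    simpa [Function.uncurry_def, Real.norm_eq_abs] using h5
  have hfin : (∫ x, ∫ y, |g (x, y)| ∂ν ∂μ) ≤ m := by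
    calc (∫ x, ∫ y, |g (x, y)| ∂ν ∂μ) ≤ ∫ _, m ∂μ := by
          refine integral_mono_of_nonneg
            (Filter.Eventually.of_forall fun x => integral_nonneg fun y => abs_nonneg _)
            (integrable_const m) (Filter.Eventually.of_forall fun x => hbd' x)
      _ = m := by simp
  rw [hswap] at stepE
  linarith

end BmoAux

theorem lower_dim_bmo_subset_rec_bmo {n₁ n₂ : ℕ}
    (𝒮 : Set (Set ((Fin n₁ → ℝ) × (Fin n₂ → ℝ))))
    (𝒮x : Set (Set (Fin n₁ → ℝ))) (𝒮y : Set (Set (Fin n₂ → ℝ)))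
    (h𝒮 : IsShapeBasis 𝒮) (h𝒮x : IsShapeBasis 𝒮x) (h𝒮y : IsShapeBasis 𝒮y)
    (hdec : StrongDecomposition2 𝒮 𝒮x 𝒮y)
    (f : (Fin n₁ → ℝ) × (Fin n₂ → ℝ) → ℝ) (hfm : Measurable f)
    (hfi : ∀ S ∈ 𝒮, IntegrableOn f S)
    (hfx : ∀ (x : Fin n₁ → ℝ), ∀ S₂ ∈ 𝒮y, IntegrableOn (fun y => f (x, y)) S₂)
    (hfy : ∀ (y : Fin n₂ → ℝ), ∀ S₁ ∈ 𝒮x, IntegrableOn (fun x => f (x, y)) S₁) :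
    (bmoXNorm 𝒮x f < ⊤ →
      recBmoNorm 𝒮x 𝒮y f < ⊤ ∧ recBmoNorm 𝒮x 𝒮y f ≤ 2 * bmoXNorm 𝒮x f) ∧
    (bmoYNorm 𝒮y f < ⊤ →
      recBmoNorm 𝒮x 𝒮y f < ⊤ ∧ recBmoNorm 𝒮x 𝒮y f ≤ 2 * bmoYNorm 𝒮y f) ∧
    (bmoXNorm 𝒮x f < ⊤ ∨ bmoYNorm 𝒮y f < ⊤ →
      recBmoNorm 𝒮x 𝒮y f ≤ 2 * min (bmoXNorm 𝒮x f) (bmoYNorm 𝒮y f)) := by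
  have main : ∀ S₁ ∈ 𝒮x, ∀ S₂ ∈ 𝒮y,
      (bmoXNorm 𝒮x f < ⊤ →
        ENNReal.ofReal (⨍ x in S₁, ⨍ y in S₂,
          |f (x, y) - (⨍ y' in S₂, f (x, y')) - (⨍ x' in S₁, f (x', y)) +
            ⨍ z in S₁ ×ˢ S₂, f z|) ≤ 2 * bmoXNorm 𝒮x f) ∧
      (bmoYNorm 𝒮y f < ⊤ →
        ENNReal.ofReal (⨍ x in S₁, ⨍ y in S₂,
          |f (x, y) - (⨍ y' in S₂, f (x, y')) - (⨍ x' in S₁, f (x', y)) +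
            ⨍ z in S₁ ×ˢ S₂, f z|) ≤ 2 * bmoYNorm 𝒮y f) := by
    intro S₁ hS₁ S₂ hS₂
    obtain ⟨hS₁o, hS₁pos, hS₁fin⟩ := h𝒮x.1 S₁ hS₁
    obtain ⟨hS₂o, hS₂pos, hS₂fin⟩ := h𝒮y.1 S₂ hS₂
    haveI i1 : IsFiniteMeasure (volume.restrict S₁) :=
      ⟨by rwa [Measure.restrict_apply_univ]⟩
    haveI i2 : IsFiniteMeasure (volume.restrict S₂) :=
      ⟨by rwa [Measure.restrict_apply_univ]⟩
    set μ : Measure (Fin n₁ → ℝ) := (volume S₁)⁻¹ • volume.restrict S₁ with hμ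
    set ν : Measure (Fin n₂ → ℝ) := (volume S₂)⁻¹ • volume.restrict S₂ with hν
    haveI : IsProbabilityMeasure μ := by
      constructor
      rw [hμ, Measure.smul_apply, Measure.restrict_apply_univ, smul_eq_mul]
      exact ENNReal.inv_mul_cancel hS₁pos.ne' hS₁fin.ne
    haveI : IsProbabilityMeasure ν := by
      constructor
      rw [hν, Measure.smul_apply, Measure.restrict_apply_univ, smul_eq_mul]
      exact ENNReal.inv_mul_cancel hS₂pos.ne' hS₂fin.ne
    have e1 : ∀ g : (Fin n₁ → ℝ) → ℝ, (⨍ x in S₁, g x) = ∫ x, g x ∂μ := by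
      intro g; rw [average_eq', Measure.restrict_apply_univ]
    have e2 : ∀ g : (Fin n₂ → ℝ) → ℝ, (⨍ y in S₂, g y) = ∫ y, g y ∂ν := by
      intro g; rw [average_eq', Measure.restrict_apply_univ]
    have hre : (volume : Measure ((Fin n₁ → ℝ) × (Fin n₂ → ℝ))).restrict (S₁ ×ˢ S₂)
        = (volume.restrict S₁).prod (volume.restrict S₂) := by
      rw [Measure.volume_eq_prod, Measure.prod_restrict]
    have hvol : volume (S₁ ×ˢ S₂) = volume S₁ * volume S₂ := by
      rw [Measure.volume_eq_prod, Measure.prod_prod]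
    have h7 : ((volume (S₁ ×ˢ S₂))⁻¹ • volume.restrict (S₁ ×ˢ S₂)
        : Measure ((Fin n₁ → ℝ) × (Fin n₂ → ℝ))) = μ.prod ν := by
      rw [hμ, hν, BmoAux.smul_prod_smul _ _ _ _
        (ENNReal.inv_ne_top.2 hS₁pos.ne') (ENNReal.inv_ne_top.2 hS₂pos.ne'),
        hre, hvol, ENNReal.mul_inv (Or.inl hS₁pos.ne') (Or.inl hS₁fin.ne)]
    have e3 : (⨍ z in S₁ ×ˢ S₂, f z) = ∫ z, f z ∂(μ.prod ν) := by
      rw [average_eq', Measure.restrict_apply_univ, h7]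
    have hfint : Integrable f (μ.prod ν) := by
      rw [← h7]
      exact (hfi _ (hdec.2 S₁ hS₁ S₂ hS₂)).smul_measure
        (by simp [hvol, ENNReal.mul_ne_top, hS₁fin.ne, hS₂fin.ne,
          ENNReal.inv_ne_top, ENNReal.mul_pos hS₁pos.ne' hS₂pos.ne',
          (ENNReal.mul_pos hS₁pos.ne' hS₂pos.ne').ne'])
    have hνint : ∀ x, Integrable (fun y => f (x, y)) ν := fun x =>
      (hfx x S₂ hS₂).smul_measure (ENNReal.inv_ne_top.2 hS₂pos.ne')
    have hμint : ∀ y, Integrable (fun x => f (x, y)) μ := fun y =>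
      (hfy y S₁ hS₁).smul_measure (ENNReal.inv_ne_top.2 hS₁pos.ne')
    constructor
    · intro hX
      have hb : ∀ y, ∫ x, |f (x, y) - ∫ x', f (x', y) ∂μ| ∂μ ≤ (bmoXNorm 𝒮x f).toReal := by
        intro y
        have h8 : ENNReal.ofReal (⨍ x in S₁, |f (x, y) - ⨍ x' in S₁, f (x', y)|)
            ≤ bmoXNorm 𝒮x f :=
          le_iSup_of_le y (le_iSup₂_of_le S₁ hS₁ le_rfl)
        rw [show (⨍ x in S₁, |f (x, y) - ⨍ x' in S₁, f (x', y)|)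
            = ∫ x, |f (x, y) - ∫ x', f (x', y) ∂μ| ∂μ by simp only [e1]] at h8
        have hv : 0 ≤ ∫ x, |f (x, y) - ∫ x', f (x', y) ∂μ| ∂μ :=
          integral_nonneg fun x => abs_nonneg _
        calc (∫ x, |f (x, y) - ∫ x', f (x', y) ∂μ| ∂μ)
            = (ENNReal.ofReal (∫ x, |f (x, y) - ∫ x', f (x', y) ∂μ| ∂μ)).toReal :=
              (ENNReal.toReal_ofReal hv).symm
          _ ≤ (bmoXNorm 𝒮x f).toReal := ENNReal.toReal_mono hX.ne h8
      have hkey := BmoAux.key_prob_x μ ν f hfm hfint hνint (bmoXNorm 𝒮x f).toReal hb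
      simp only [e1, e2, e3]
      calc ENNReal.ofReal (∫ x, ∫ y, |f (x, y) - (∫ y', f (x, y') ∂ν) -
            (∫ x', f (x', y) ∂μ) + ∫ z, f z ∂(μ.prod ν)| ∂ν ∂μ)
          ≤ ENNReal.ofReal (2 * (bmoXNorm 𝒮x f).toReal) := ENNReal.ofReal_le_ofReal hkey
        _ = 2 * bmoXNorm 𝒮x f := by
            rw [ENNReal.ofReal_mul (by norm_num : (0:ℝ) ≤ 2), ENNReal.ofReal_ofNat,
              ENNReal.ofReal_toReal hX.ne]
    · intro hY
      have hb : ∀ x, ∫ y, |f (x, y) - ∫ y', f (x, y') ∂ν| ∂ν ≤ (bmoYNorm 𝒮y f).toReal := by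
        intro x
        have h8 : ENNReal.ofReal (⨍ y in S₂, |f (x, y) - ⨍ y' in S₂, f (x, y')|)
            ≤ bmoYNorm 𝒮y f :=
          le_iSup_of_le x (le_iSup₂_of_le S₂ hS₂ le_rfl)
        rw [show (⨍ y in S₂, |f (x, y) - ⨍ y' in S₂, f (x, y')|)
            = ∫ y, |f (x, y) - ∫ y', f (x, y') ∂ν| ∂ν by simp only [e2]] at h8
        have hv : 0 ≤ ∫ y, |f (x, y) - ∫ y', f (x, y') ∂ν| ∂ν :=
          integral_nonneg fun y => abs_nonneg _
        calc (∫ y, |f (x, y) - ∫ y', f (x, y') ∂ν| ∂ν)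
            = (ENNReal.ofReal (∫ y, |f (x, y) - ∫ y', f (x, y') ∂ν| ∂ν)).toReal :=
              (ENNReal.toReal_ofReal hv).symm
          _ ≤ (bmoYNorm 𝒮y f).toReal := ENNReal.toReal_mono hY.ne h8
      have hkey := BmoAux.key_prob_y μ ν f hfm hfint hνint hμint (bmoYNorm 𝒮y f).toReal hb
      simp only [e1, e2, e3]
      calc ENNReal.ofReal (∫ x, ∫ y, |f (x, y) - (∫ y', f (x, y') ∂ν) -
            (∫ x', f (x', y) ∂μ) + ∫ z, f z ∂(μ.prod ν)| ∂ν ∂μ)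
          ≤ ENNReal.ofReal (2 * (bmoYNorm 𝒮y f).toReal) := ENNReal.ofReal_le_ofReal hkey
        _ = 2 * bmoYNorm 𝒮y f := by
            rw [ENNReal.ofReal_mul (by norm_num : (0:ℝ) ≤ 2), ENNReal.ofReal_ofNat,
              ENNReal.ofReal_toReal hY.ne]
  have keyX : bmoXNorm 𝒮x f < ⊤ → recBmoNorm 𝒮x 𝒮y f ≤ 2 * bmoXNorm 𝒮x f := by
    intro hX
    exact iSup₂_le fun S₁ hS₁ => iSup₂_le fun S₂ hS₂ => (main S₁ hS₁ S₂ hS₂).1 hX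
  have keyY : bmoYNorm 𝒮y f < ⊤ → recBmoNorm 𝒮x 𝒮y f ≤ 2 * bmoYNorm 𝒮y f := by
    intro hY
    exact iSup₂_le fun S₁ hS₁ => iSup₂_le fun S₂ hS₂ => (main S₁ hS₁ S₂ hS₂).2 hY
  refine ⟨fun hX => ⟨lt_of_le_of_lt (keyX hX) ?_, keyX hX⟩,
    fun hY => ⟨lt_of_le_of_lt (keyY hY) ?_, keyY hY⟩, fun h => ?_⟩
  · exact ENNReal.mul_lt_top (by norm_num) hX
  · exact ENNReal.mul_lt_top (by norm_num) hY
  · rcases le_total (bmoXNorm 𝒮x f) (bmoYNorm 𝒮y f) with hle | hle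
    · rw [min_eq_left hle]
      exact keyX (h.elim id fun h2 => lt_of_le_of_lt hle h2)
    · rw [min_eq_right hle]
      exact keyY (h.elim (fun h2 => lt_of_le_of_lt hle h2) id)
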